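/- Fix t ∈ (0,1) and let F_r(z) = 1 - 3(1-t)/( t·sinh²( arcsinh(√(3(1-t)/(t(1-z)))) + r·arccosh(√((3-2t)/t)) ) ) for z ∈ [0,1) and integer r ≥ 0. Then F_0(z) = z and F_{r+1}(z) = F_r(φ_t(z)) for all r ≥ 0 and z ∈ [0,1), where φ_t(z) = 1 - ((1/√(1-z))·√((3-2t)/t) + √(1 + 3(1-t)/(t(1-z))))^{-2}. Hence F_r is the r-th iterate of φ_t. -/
import Mathlib


/-- Inverse hyperbolic cosine (for `x ≥ 1`). -/
noncomputable def arcosh (x : ℝ) : ℝ := Real.log (x + Real.sqrt (x ^ 2 - 1))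

/-- The generating function `φ_t`. -/
noncomputable def phiT (t z : ℝ) : ℝ :=
  1 - ((1 / Real.sqrt (1 - z)) * Real.sqrt ((3 - 2 * t) / t) +
        Real.sqrt (1 + 3 * (1 - t) / (t * (1 - z))))⁻¹ ^ 2

/-- The claimed closed form for the `r`-th iterate of `φ_t`. -/
noncomputable def F (t : ℝ) (r : ℕ) (z : ℝ) : ℝ :=
  1 - 3 * (1 - t) /
    (t * Real.sinh (Real.arsinh (Real.sqrt (3 * (1 - t) / (t * (1 - z)))) +
          r * arcosh (Real.sqrt ((3 - 2 * t) / t))) ^ 2)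

lemma cosh_arcosh {x : ℝ} (hx : 1 ≤ x) : Real.cosh (arcosh x) = x := by
  have h1 : (0:ℝ) ≤ x^2 - 1 := by nlinarith
  have hs : Real.sqrt (x^2-1) ^ 2 = x^2 - 1 := Real.sq_sqrt h1
  have hs0 : 0 ≤ Real.sqrt (x^2-1) := Real.sqrt_nonneg _
  have hy : 0 < x + Real.sqrt (x^2-1) := by nlinarith
  have hinv : (x + Real.sqrt (x^2-1))⁻¹ = x - Real.sqrt (x^2-1) := by
    have : (x + Real.sqrt (x^2-1)) * (x - Real.sqrt (x^2-1)) = 1 := by nlinarith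
    exact inv_eq_of_mul_eq_one_right this
  rw [arcosh, Real.cosh_eq, Real.exp_log hy, Real.exp_neg, Real.exp_log hy, hinv]
  ring

lemma sinh_arcosh {x : ℝ} (hx : 1 ≤ x) : Real.sinh (arcosh x) = Real.sqrt (x^2 - 1) := by
  have h1 : (0:ℝ) ≤ x^2 - 1 := by nlinarith
  have hs : Real.sqrt (x^2-1) ^ 2 = x^2 - 1 := Real.sq_sqrt h1
  have hs0 : 0 ≤ Real.sqrt (x^2-1) := Real.sqrt_nonneg _
  have hy : 0 < x + Real.sqrt (x^2-1) := by nlinarith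
  have hinv : (x + Real.sqrt (x^2-1))⁻¹ = x - Real.sqrt (x^2-1) := by
    have : (x + Real.sqrt (x^2-1)) * (x - Real.sqrt (x^2-1)) = 1 := by nlinarith
    exact inv_eq_of_mul_eq_one_right this
  rw [arcosh, Real.sinh_eq, Real.exp_log hy, Real.exp_neg, Real.exp_log hy, hinv]
  ring

lemma key (t z : ℝ) (ht0 : 0 < t) (ht1 : t < 1) (hz1 : z < 1) :
    Real.sqrt (3*(1-t)/(t*(1 - phiT t z))) =
      Real.sinh (Real.arsinh (Real.sqrt (3*(1-t)/(t*(1-z)))) +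
        arcosh (Real.sqrt ((3-2*t)/t))) := by
  have hu : (0:ℝ) < 1 - z := by linarith
  have hsu : 0 < Real.sqrt (1 - z) := Real.sqrt_pos.mpr hu
  have hp : (0:ℝ) < 3*(1-t)/t := by apply div_pos <;> nlinarith
  have hq1 : (1:ℝ) ≤ (3-2*t)/t := by rw [le_div_iff₀ ht0]; nlinarith
  have hsq1 : 1 ≤ Real.sqrt ((3-2*t)/t) := by
    rw [show (1:ℝ) = Real.sqrt 1 by simp]
    exact Real.sqrt_le_sqrt hq1
  have hqsq : Real.sqrt ((3-2*t)/t) ^ 2 = (3-2*t)/t := Real.sq_sqrt (by linarith)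
  have hsinhc : Real.sinh (arcosh (Real.sqrt ((3-2*t)/t))) = Real.sqrt (3*(1-t)/t) := by
    rw [sinh_arcosh hsq1, hqsq]
    congr 1
    field_simp
    ring
  have hcoshc := cosh_arcosh hsq1
  have hsnn : (0:ℝ) ≤ 3*(1-t)/(t*(1-z)) := by
    apply div_nonneg (by nlinarith) (by positivity)
  have hssq : Real.sqrt (3*(1-t)/(t*(1-z))) ^ 2 = 3*(1-t)/(t*(1-z)) := Real.sq_sqrt hsnn
  have hBpos : 0 < (1 / Real.sqrt (1-z)) * Real.sqrt ((3-2*t)/t) +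
      Real.sqrt (1 + 3*(1-t)/(t*(1-z))) := by
    have h1 : 0 < (1 / Real.sqrt (1-z)) * Real.sqrt ((3-2*t)/t) :=
      mul_pos (by positivity) (by linarith)
    have h2 : 0 ≤ Real.sqrt (1 + 3*(1-t)/(t*(1-z))) := Real.sqrt_nonneg _
    linarith
  set B := (1 / Real.sqrt (1-z)) * Real.sqrt ((3-2*t)/t) +
      Real.sqrt (1 + 3*(1-t)/(t*(1-z))) with hBdef
  have h1phi : 1 - phiT t z = B⁻¹^2 := by rw [phiT]; ring
  have harg : 3*(1-t)/(t*(1 - phiT t z)) = (3*(1-t)/t) * B^2 := by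
    rw [h1phi, show t * B⁻¹^2 = t / B^2 by field_simp, div_div_eq_mul_div]
    ring
  have hsplit : Real.sqrt (3*(1-t)/(t*(1-z))) = Real.sqrt (3*(1-t)/t) / Real.sqrt (1-z) := by
    rw [show 3*(1-t)/(t*(1-z)) = (3*(1-t)/t)/(1-z) by field_simp,
      Real.sqrt_div hp.le]
  rw [harg, Real.sqrt_mul hp.le, Real.sqrt_sq hBpos.le, Real.sinh_add,
    Real.sinh_arsinh, Real.cosh_arsinh, hssq, hsinhc, hcoshc, hBdef, hsplit]
  ring

lemma phiT_mem (t z : ℝ) (ht0 : 0 < t) (ht1 : t < 1) (hz : z ∈ Set.Ico (0:ℝ) 1) :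
    phiT t z ∈ Set.Ico (0:ℝ) 1 := by
  obtain ⟨hz0, hz1⟩ := hz
  have hu : (0:ℝ) < 1 - z := by linarith
  have hu1 : (1:ℝ) - z ≤ 1 := by linarith
  have hsu : 0 < Real.sqrt (1 - z) := Real.sqrt_pos.mpr hu
  have hsu1 : Real.sqrt (1 - z) ≤ 1 := Real.sqrt_le_one.mpr hu1
  have hq1 : (1:ℝ) ≤ (3-2*t)/t := by rw [le_div_iff₀ ht0]; nlinarith
  have hsq1 : 1 ≤ Real.sqrt ((3-2*t)/t) := by
    rw [show (1:ℝ) = Real.sqrt 1 by simp]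
    exact Real.sqrt_le_sqrt hq1
  have hB1 : 1 ≤ (1 / Real.sqrt (1-z)) * Real.sqrt ((3-2*t)/t) +
      Real.sqrt (1 + 3*(1-t)/(t*(1-z))) := by
    have h1 : (1:ℝ) ≤ 1 / Real.sqrt (1-z) := by
      rw [le_div_iff₀ hsu]; linarith
    have h2 : 0 ≤ Real.sqrt (1 + 3*(1-t)/(t*(1-z))) := Real.sqrt_nonneg _
    nlinarith
  have hBpos : (0:ℝ) < (1 / Real.sqrt (1-z)) * Real.sqrt ((3-2*t)/t) +
      Real.sqrt (1 + 3*(1-t)/(t*(1-z))) := by linarith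
  constructor
  · rw [phiT]
    have : ((1 / Real.sqrt (1-z)) * Real.sqrt ((3-2*t)/t) +
        Real.sqrt (1 + 3*(1-t)/(t*(1-z))))⁻¹ ≤ 1 := by
      rw [inv_le_one_iff₀]; right; exact hB1
    have h0 : (0:ℝ) ≤ ((1 / Real.sqrt (1-z)) * Real.sqrt ((3-2*t)/t) +
        Real.sqrt (1 + 3*(1-t)/(t*(1-z))))⁻¹ := by positivity
    nlinarith
  · rw [phiT]
    have : (0:ℝ) < ((1 / Real.sqrt (1-z)) * Real.sqrt ((3-2*t)/t) +
        Real.sqrt (1 + 3*(1-t)/(t*(1-z))))⁻¹ ^ 2 := by positivity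
    linarith


theorem F_is_iterate_of_phiT
    (t : ℝ) (ht : t ∈ Set.Ioo (0:ℝ) 1) :
    (∀ z ∈ Set.Ico (0:ℝ) 1, F t 0 z = z) ∧
      (∀ (r : ℕ), ∀ z ∈ Set.Ico (0:ℝ) 1, F t (r + 1) z = F t r (phiT t z)) ∧
      (∀ (r : ℕ), ∀ z ∈ Set.Ico (0:ℝ) 1, F t r z = (phiT t)^[r] z) := by
  obtain ⟨ht0, ht1⟩ := ht
  have h0 : ∀ z ∈ Set.Ico (0:ℝ) 1, F t 0 z = z := by
    intro z hz
    have hu : (0:ℝ) < 1 - z := by linarith [hz.2]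
    have hsnn : (0:ℝ) ≤ 3*(1-t)/(t*(1-z)) :=
      div_nonneg (by nlinarith) (by positivity)
    simp only [F, Nat.cast_zero, zero_mul, add_zero, Real.sinh_arsinh]
    rw [Real.sq_sqrt hsnn]
    have h1t : (0:ℝ) < 1 - t := by linarith
    field_simp
    ring
  have h1 : ∀ (r : ℕ), ∀ z ∈ Set.Ico (0:ℝ) 1, F t (r + 1) z = F t r (phiT t z) := by
    intro r z hz
    have hk := key t z ht0 ht1 hz.2
    have ha : Real.arsinh (Real.sqrt (3*(1-t)/(t*(1 - phiT t z)))) =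
        Real.arsinh (Real.sqrt (3*(1-t)/(t*(1-z)))) +
          arcosh (Real.sqrt ((3-2*t)/t)) := by
      rw [hk, Real.arsinh_sinh]
    simp only [F]
    rw [ha]
    have harg : Real.arsinh (Real.sqrt (3*(1-t)/(t*(1-z)))) +
        ((r:ℝ)+1) * arcosh (Real.sqrt ((3-2*t)/t)) =
        (Real.arsinh (Real.sqrt (3*(1-t)/(t*(1-z)))) +
          arcosh (Real.sqrt ((3-2*t)/t))) + (r:ℝ) * arcosh (Real.sqrt ((3-2*t)/t)) := by
      ring
    push_cast
    rw [harg]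
  refine ⟨h0, h1, ?_⟩
  intro r
  induction r with
  | zero => intro z hz; simpa using h0 z hz
  | succ n ih =>
    intro z hz
    rw [h1 n z hz, ih (phiT t z) (phiT_mem t z ht0 ht1 hz),
      Function.iterate_succ_apply]
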